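/- (Fixed points of T.) Suppose Assumptions 1, 2, 3 hold, A = B D with B symmetric and B C = C B, and γ > 0. Let T(Z, W) = (P − √C W, √C P + (I − C) W) with P = D·prox_{γg}(B Z) − γ ∇f(prox_{γg}(B Z)). If (Z̃*, W̃*) is a fixed point of T with 1_mᵀ W̃* = 0 (equivalently, W̃* = √C Ỹ* for some Ỹ*), then √C Z̃* = 0 and prox_{γg}(B Z̃*) = 1_m (x*)ᵀ, where x* is the unique minimizer of F + G over ℝ^d. -/

import Mathlib

open Matrix

/-- Squared Euclidean norm of a vector in ℝ^d. -/
noncomputable def vecNormSq {d : ℕ} (v : Fin d → ℝ) : ℝ := ∑ j, v j ^ 2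

/-- The continuous linear map `u ↦ ⟨v, u⟩` on ℝ^d (used to state that `v` is a gradient). -/
noncomputable def dotCLM {d : ℕ} (v : Fin d → ℝ) : (Fin d → ℝ) →L[ℝ] ℝ :=
  LinearMap.toContinuousLinearMap
    (∑ j, v j • (LinearMap.proj j : (Fin d → ℝ) →ₗ[ℝ] ℝ))

/-- Squared Frobenius norm. -/
noncomputable def frobSq {m d : ℕ} (X : Matrix (Fin m) (Fin d) ℝ) : ℝ :=
  ∑ i, ∑ j, X i j ^ 2

/-- Frobenius inner product `⟨X, Y⟩_F = trace(Xᵀ Y)`. -/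
noncomputable def frobInner {m d : ℕ} (X Y : Matrix (Fin m) (Fin d) ℝ) : ℝ :=
  ∑ i, ∑ j, X i j * Y i j

/-- All ones vector `1_m`. -/
def onesV (m : ℕ) : Fin m → ℝ := fun _ => 1

/-- The consensus matrix `1_m xᵀ` (all rows equal to `x`). -/
def consMat (m : ℕ) {d : ℕ} (x : Fin d → ℝ) : Matrix (Fin m) (Fin d) ℝ :=
  Matrix.of fun _ j => x j

/-- The matrix `∇f(X)` whose `i`-th row is `∇f_i(x_i)`. -/
noncomputable def gradMat {m d : ℕ} (gradf : Fin m → (Fin d → ℝ) → (Fin d → ℝ))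
    (X : Matrix (Fin m) (Fin d) ℝ) : Matrix (Fin m) (Fin d) ℝ :=
  Matrix.of fun i j => gradf i (X i) j

/-- `v` is a subgradient of the extended-valued convex function `G` at `x`. -/
def IsSubgradAt {d : ℕ} (G : (Fin d → ℝ) → EReal) (v x : Fin d → ℝ) : Prop :=
  ∀ u : Fin d → ℝ, G x + (((∑ j, v j * (u j - x j)) : ℝ) : EReal) ≤ G u

/-- Convexity for an extended-real-valued function. -/
def ERealConvexOn {d : ℕ} (G : (Fin d → ℝ) → EReal) : Prop :=
  ∀ x y : Fin d → ℝ, ∀ a b : ℝ, 0 ≤ a → 0 ≤ b → a + b = 1 →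
    G (a • x + b • y) ≤ (a : EReal) * G x + (b : EReal) * G y

/-- `G` is proper: never `⊥` and finite somewhere. -/
def GProper {d : ℕ} (G : (Fin d → ℝ) → EReal) : Prop :=
  (∀ x, G x ≠ ⊥) ∧ (∃ x, G x ≠ ⊤)

/-- `g(X) = Σ_i G(x_i)`. -/
noncomputable def gSum {m d : ℕ} (G : (Fin d → ℝ) → EReal)
    (X : Matrix (Fin m) (Fin d) ℝ) : EReal :=
  ∑ i, G (X i)

/-- Objective of the proximal subproblem `Y ↦ g(Y) + (1/(2γ))‖Y − Z‖²_F`. -/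
noncomputable def proxObj {m d : ℕ} (G : (Fin d → ℝ) → EReal) (γ : ℝ)
    (Z Y : Matrix (Fin m) (Fin d) ℝ) : EReal :=
  gSum G Y + (((1 / (2 * γ) * frobSq (Y - Z)) : ℝ) : EReal)

/-- `P` is the unique minimizer of the proximal subproblem, i.e. `P = prox_{γ g}(Z)`. -/
def IsProx {m d : ℕ} (G : (Fin d → ℝ) → EReal) (γ : ℝ)
    (Z P : Matrix (Fin m) (Fin d) ℝ) : Prop :=
  (∀ Y, proxObj G γ Z P ≤ proxObj G γ Z Y) ∧
  (∀ Y, (∀ Y', proxObj G γ Z Y ≤ proxObj G γ Z Y') → Y = P)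

/-- Largest eigenvalue of a symmetric matrix, via the Rayleigh quotient. -/
noncomputable def lamMax {m : ℕ} (P : Matrix (Fin m) (Fin m) ℝ) : ℝ :=
  sSup {r : ℝ | ∃ z : Fin m → ℝ, vecNormSq z = 1 ∧ r = z ⬝ᵥ (P *ᵥ z)}

/-- Smallest eigenvalue of a symmetric matrix, via the Rayleigh quotient. -/
noncomputable def lamMin {m : ℕ} (P : Matrix (Fin m) (Fin m) ℝ) : ℝ :=
  sInf {r : ℝ | ∃ z : Fin m → ℝ, vecNormSq z = 1 ∧ r = z ⬝ᵥ (P *ᵥ z)}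

/-- Second-smallest eigenvalue `λ₂(C) = min{⟨z, Cz⟩ : ‖z‖ = 1, 1ᵀz = 0}`. -/
noncomputable def lam2 {m : ℕ} (C : Matrix (Fin m) (Fin m) ℝ) : ℝ :=
  sInf {r : ℝ | ∃ z : Fin m → ℝ, vecNormSq z = 1 ∧ (∑ i, z i) = 0 ∧ r = z ⬝ᵥ (C *ᵥ z)}

/-- The positive semidefinite square root of a PSD matrix (Mathlib's former
`Matrix.PosSemidef.sqrt`, removed upstream; restored with its old definition). -/
noncomputable def Matrix.PosSemidef.sqrt {n : Type*} [Fintype n] [DecidableEq n]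
    {A : Matrix n n ℝ} (hA : A.PosSemidef) : Matrix n n ℝ :=
  hA.1.eigenvectorUnitary.1 * diagonal (Real.sqrt ∘ hA.1.eigenvalues) *
    (star hA.1.eigenvectorUnitary : Matrix n n ℝ)

lemma Matrix.PosSemidef.sqrt_mul_self {n : Type*} [Fintype n] [DecidableEq n]
    {A : Matrix n n ℝ} (hA : A.PosSemidef) : hA.sqrt * hA.sqrt = A := by
  have hU : (star hA.1.eigenvectorUnitary : Matrix n n ℝ) * (hA.1.eigenvectorUnitary : Matrix n n ℝ) = 1 :=
    Unitary.coe_star_mul_self _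
  conv_rhs => rw [hA.1.spectral_theorem, Unitary.conjStarAlgAut_apply]
  unfold Matrix.PosSemidef.sqrt
  calc _ = (hA.1.eigenvectorUnitary : Matrix n n ℝ) * diagonal (Real.sqrt ∘ hA.1.eigenvalues) *
        ((star hA.1.eigenvectorUnitary : Matrix n n ℝ) * (hA.1.eigenvectorUnitary : Matrix n n ℝ)) *
        diagonal (Real.sqrt ∘ hA.1.eigenvalues) * (star hA.1.eigenvectorUnitary : Matrix n n ℝ) := by
        simp only [Matrix.mul_assoc]
  _ = _ := by
    rw [hU, Matrix.mul_one, Matrix.mul_assoc (hA.1.eigenvectorUnitary : Matrix n n ℝ),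
      diagonal_mul_diagonal]
    congr 3
    funext i
    simp [Real.mul_self_sqrt (hA.eigenvalues_nonneg i)]

lemma Matrix.PosSemidef.posSemidef_sqrt {n : Type*} [Fintype n] [DecidableEq n]
    {A : Matrix n n ℝ} (hA : A.PosSemidef) : hA.sqrt.PosSemidef := by
  unfold Matrix.PosSemidef.sqrt
  have hd : (diagonal (Real.sqrt ∘ hA.1.eigenvalues)).PosSemidef :=
    posSemidef_diagonal_iff.mpr (fun i => Real.sqrt_nonneg _)
  have := hd.mul_mul_conjTranspose_same (hA.1.eigenvectorUnitary : Matrix n n ℝ)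
  simpa [Matrix.star_eq_conjTranspose] using this

lemma ecoe_sum {ι : Type*} (s : Finset ι) (r : ι → ℝ) :
    ((∑ i ∈ s, r i : ℝ) : EReal) = ∑ i ∈ s, (r i : EReal) := by
  induction s using Finset.cons_induction with
  | empty => simp
  | cons a s ha ih => rw [Finset.sum_cons, Finset.sum_cons, EReal.coe_add, ih]

lemma esum_top {ι : Type*} {s : Finset ι} (hs : s.Nonempty) :
    ∑ _i ∈ s, (⊤ : EReal) = ⊤ := by
  induction s using Finset.cons_induction with
  | empty => exact absurd hs (by simp)
  | cons a s ha ih =>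
    rw [Finset.sum_cons]
    rcases s.eq_empty_or_nonempty with h | h
    · simp [h]
    · rw [ih h]; simp

lemma dotCLM_apply {d : ℕ} (v u : Fin d → ℝ) : dotCLM v u = ∑ j, v j * u j := by
  simp [dotCLM, LinearMap.sum_apply, smul_eq_mul]

lemma cvx_grad {d : ℕ} {q : (Fin d → ℝ) → ℝ} (hq : ConvexOn ℝ Set.univ q)
    {w x y : Fin d → ℝ} (hd : HasFDerivAt q (dotCLM w) x) :
    q x + ∑ j, w j * (y j - x j) ≤ q y := by
  set φ : ℝ → ℝ := fun t => q (t • (y - x) + x) with hφ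
  have hconv : ConvexOn ℝ Set.univ φ := by
    have := hq.comp_affineMap (AffineMap.lineMap x y : ℝ →ᵃ[ℝ] (Fin d → ℝ))
    have he : (q ∘ ⇑(AffineMap.lineMap x y : ℝ →ᵃ[ℝ] (Fin d → ℝ))) = φ := by
      funext t
      simp only [hφ, Function.comp, AffineMap.lineMap_apply_module]
      congr 1
      module
    rw [he] at this
    simpa using this
  have hline : HasDerivAt (fun t : ℝ => t • (y - x) + x) (y - x) 0 := by
    simpa using ((hasDerivAt_id (0:ℝ)).smul_const (y - x)).add_const x
  have hd' : HasFDerivAt q (dotCLM w) ((0:ℝ) • (y - x) + x) := by simpa using hd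
  have hd0 : HasDerivAt φ (∑ j, w j * (y j - x j)) 0 := by
    have := hd'.comp_hasDerivAt 0 hline
    simpa [hφ, Function.comp_def, dotCLM_apply] using this
  have hs := hconv.le_slope_of_hasDerivAt (Set.mem_univ 0) (Set.mem_univ 1) zero_lt_one hd0
  have hsl : slope φ 0 1 = q y - q x := by
    simp [slope_def_field, hφ]
  rw [hsl] at hs
  have h0 : φ 0 = q x := by simp [hφ]
  linarith

lemma normSq_fderiv {d : ℕ} (x : Fin d → ℝ) :
    HasFDerivAt (vecNormSq (d := d)) (dotCLM (fun j => 2 * x j)) x := by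
  have h1 : ∀ j : Fin d, HasFDerivAt (fun y : Fin d → ℝ => y j ^ 2)
      ((2 * x j) • (LinearMap.proj j : (Fin d → ℝ) →ₗ[ℝ] ℝ).toContinuousLinearMap) x := by
    intro j
    have hp : HasFDerivAt (fun y : Fin d → ℝ => y j)
        ((LinearMap.proj j : (Fin d → ℝ) →ₗ[ℝ] ℝ).toContinuousLinearMap) x :=
      (LinearMap.proj j : (Fin d → ℝ) →ₗ[ℝ] ℝ).toContinuousLinearMap.hasFDerivAt
    have := hp.fun_mul hp
    simpa [pow_two, two_mul, add_smul] using this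
  have hsum := HasFDerivAt.fun_sum (fun j (_ : j ∈ Finset.univ) => h1 j)
  have he : (∑ j : Fin d, (2 * x j) • (LinearMap.proj j : (Fin d → ℝ) →ₗ[ℝ] ℝ).toContinuousLinearMap)
      = dotCLM (fun j => 2 * x j) := by
    apply ContinuousLinearMap.ext
    intro u
    simp [dotCLM, LinearMap.sum_apply, smul_eq_mul]
  rw [he] at hsum
  exact hsum

lemma strong_grad {d : ℕ} {μ : ℝ} {f : (Fin d → ℝ) → ℝ} {gradf : (Fin d → ℝ) → (Fin d → ℝ)}
    (hdiff : ∀ x, HasFDerivAt f (dotCLM (gradf x)) x)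
    (hsc : ConvexOn ℝ Set.univ fun x => f x - μ / 2 * vecNormSq x) (x y : Fin d → ℝ) :
    f x + ∑ j, gradf x j * (y j - x j) + μ / 2 * vecNormSq (y - x) ≤ f y := by
  have hd : HasFDerivAt (fun v => f v - μ / 2 * vecNormSq v)
      (dotCLM (fun j => gradf x j - μ * x j)) x := by
    have h := (hdiff x).sub ((normSq_fderiv x).const_mul (μ / 2))
    have he : dotCLM (gradf x) - (μ / 2) • dotCLM (fun j => 2 * x j)
        = dotCLM (fun j => gradf x j - μ * x j) := by
      apply ContinuousLinearMap.ext
      intro u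
      simp [dotCLM_apply, Finset.mul_sum, ← Finset.sum_sub_distrib]
      exact Finset.sum_congr rfl fun j _ => by ring
    rwa [he] at h
  have h := cvx_grad hsc hd (y := y)
  have hsplit : ∑ j, (gradf x j - μ * x j) * (y j - x j)
      = ∑ j, gradf x j * (y j - x j) - μ * ∑ j, x j * (y j - x j) := by
    rw [Finset.mul_sum, ← Finset.sum_sub_distrib]
    exact Finset.sum_congr rfl fun j _ => by ring
  have hN : vecNormSq (y - x) = vecNormSq y - vecNormSq x - 2 * ∑ j, x j * (y j - x j) := by
    unfold vecNormSq
    rw [Finset.mul_sum, ← Finset.sum_sub_distrib, ← Finset.sum_sub_distrib]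
    exact Finset.sum_congr rfl fun j _ => by simp [Pi.sub_apply]; ring
  rw [hsplit] at h
  rw [hN]
  nlinarith [h]

lemma normSq_expand {d : ℕ} (a b : Fin d → ℝ) (t : ℝ) :
    vecNormSq (fun j => a j + t * b j)
      = vecNormSq a + 2 * t * (∑ j, a j * b j) + t ^ 2 * vecNormSq b := by
  unfold vecNormSq
  rw [Finset.mul_sum, Finset.mul_sum, ← Finset.sum_add_distrib, ← Finset.sum_add_distrib]
  exact Finset.sum_congr rfl fun j _ => by ring

set_option maxHeartbeats 1000000 in
/-- fixed points of `T` yield the consensus optimal solution. -/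
theorem stmt_16 {m d : ℕ} (μ L γ : ℝ) (hμ : 0 < μ) (hμL : μ ≤ L) (hγ : 0 < γ)
    (f : Fin m → (Fin d → ℝ) → ℝ) (gradf : Fin m → (Fin d → ℝ) → (Fin d → ℝ))
    (hdiff : ∀ i x, HasFDerivAt (f i) (dotCLM (gradf i x)) x)
    (hsc : ∀ i, ConvexOn ℝ Set.univ fun x => f i x - μ / 2 * vecNormSq x)
    (hsmooth : ∀ i x y, vecNormSq (gradf i x - gradf i y) ≤ L ^ 2 * vecNormSq (x - y))
    (G : (Fin d → ℝ) → EReal) (hGp : GProper G) (hGc : ERealConvexOn G)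
    (hGl : LowerSemicontinuous G)
    (A B C D : Matrix (Fin m) (Fin m) ℝ)
    -- Assumption 2
    (hC : C.PosSemidef)
    (hnull : ∀ z : Fin m → ℝ, C *ᵥ z = 0 ↔ ∃ c : ℝ, z = fun _ => c)
    -- Assumption 3
    (h3a : onesV m ⬝ᵥ (A *ᵥ onesV m) = (m : ℝ))
    (h3b : onesV m ᵥ* B = onesV m)
    (hABD : A = B * D) (hBsym : B.IsSymm) (hBC : B * C = C * B)
    -- the proximal operator of γ g
    (prox : Matrix (Fin m) (Fin d) ℝ → Matrix (Fin m) (Fin d) ℝ)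
    (hprox : ∀ Z, IsProx G γ Z (prox Z))
    -- a fixed point of T with 1ᵀ W̃* = 0
    (Zt Wt : Matrix (Fin m) (Fin d) ℝ)
    (hfix₁ : (D * prox (B * Zt) - γ • gradMat gradf (prox (B * Zt))) - hC.sqrt * Wt = Zt)
    (hfix₂ : hC.sqrt * (D * prox (B * Zt) - γ • gradMat gradf (prox (B * Zt)))
        + (1 - C) * Wt = Wt)
    (hWt : onesV m ᵥ* Wt = 0)
    -- x* is the (unique) minimizer of F + G
    (xstar : Fin d → ℝ)
    (hxstar : ∀ u : Fin d → ℝ,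
      ((((1 / (m : ℝ)) * ∑ i, f i xstar) : ℝ) : EReal) + G xstar ≤
        ((((1 / (m : ℝ)) * ∑ i, f i u) : ℝ) : EReal) + G u) :
    hC.sqrt * Zt = 0 ∧ prox (B * Zt) = consMat m xstar := by
  classical
  set S := hC.sqrt with hSdef
  have hSS : S * S = C := hC.sqrt_mul_self
  have hherm : S.IsHermitian := hC.posSemidef_sqrt.1
  have hsymT : Sᵀ = S := by
    ext i j
    have := congrFun (congrFun hherm.eq i) j
    simpa [Matrix.conjTranspose_apply] using this
  -- Part 1 : S * Zt = 0
  set P := D * prox (B * Zt) - γ • gradMat gradf (prox (B * Zt)) with hPdef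
  have hSP : S * P = C * Wt := by
    have h := hfix₂
    rw [Matrix.sub_mul, Matrix.one_mul] at h
    have h2 := eq_sub_of_add_eq h
    rw [sub_sub_cancel] at h2
    exact h2
  have hSZ : S * Zt = 0 := by
    rw [← hfix₁, Matrix.mul_sub, ← Matrix.mul_assoc, hSS, hSP, sub_self]
  refine ⟨hSZ, ?_⟩
  -- trivial case m = 0
  rcases Nat.eq_zero_or_pos m with hm | hm
  · subst hm
    ext i j
    exact i.elim0
  have i0 : Fin m := ⟨0, hm⟩
  have hmne : (m : ℝ) ≠ 0 := Nat.cast_ne_zero.mpr hm.ne'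
  have hmpos : (0:ℝ) < (m:ℝ) := Nat.cast_pos.mpr hm
  -- rows of Zt are constant
  have hCZ : C * Zt = 0 := by rw [← hSS, Matrix.mul_assoc, hSZ, Matrix.mul_zero]
  have hzc : ∀ j, ∃ c : ℝ, (fun i => Zt i j) = fun _ => c := by
    intro j
    apply (hnull _).mp
    funext i
    have := congrFun (congrFun hCZ i) j
    simpa [Matrix.mulVec, Matrix.mul_apply, dotProduct] using this
  choose z hz using hzc
  have hZrow : ∀ i j, Zt i j = z j := fun i j => congrFun (hz j) i
  -- B has unit column and row sums
  have hBcol : ∀ l, ∑ i, B i l = 1 := by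
    intro l
    have h := congrFun h3b l
    simpa [Matrix.vecMul, dotProduct, onesV] using h
  have hBapply : ∀ a b, B a b = B b a := by
    intro a b
    have := congrFun (congrFun hBsym b) a
    simpa [Matrix.transpose_apply] using this
  have hBrow : ∀ i, ∑ k, B i k = 1 := by
    intro i
    rw [Finset.sum_congr rfl fun k _ => hBapply i k]
    exact hBcol i
  have hBZ : B * Zt = Zt := by
    ext i j
    rw [Matrix.mul_apply]
    calc ∑ k, B i k * Zt k j = ∑ k, B i k * z j :=
          Finset.sum_congr rfl fun k _ => by rw [hZrow k j]
    _ = (∑ k, B i k) * z j := (Finset.sum_mul _ _ _).symm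
    _ = z j := by rw [hBrow i, one_mul]
    _ = Zt i j := (hZrow i j).symm
  set Zc := B * Zt with hZcdef
  set X := prox Zc with hXdef
  have hZcrow : ∀ i j, Zc i j = z j := by
    intro i j
    rw [hBZ]
    exact hZrow i j
  have hmin := (hprox Zc).1
  have huniq := (hprox Zc).2
  -- all rows of X are equal
  have hrows : ∀ i k : Fin m, X i = X k := by
    intro i k
    set e := Equiv.swap i k with he
    set Y : Matrix (Fin m) (Fin d) ℝ := Matrix.of (fun a j => X (e a) j) with hY
    have hg : gSum G Y = gSum G X := by
      unfold gSum
      exact Equiv.sum_comp e (fun a => G (X a))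
    have hfro : frobSq (Y - Zc) = frobSq (X - Zc) := by
      unfold frobSq
      rw [← Equiv.sum_comp e (fun a => ∑ j, ((X - Zc) a j) ^ 2)]
      refine Finset.sum_congr rfl fun a _ => Finset.sum_congr rfl fun j _ => ?_
      simp only [Matrix.sub_apply, hY, Matrix.of_apply]
      rw [hZcrow a j, hZcrow (e a) j]
    have hYmin : ∀ Y', proxObj G γ Zc Y ≤ proxObj G γ Zc Y' := by
      intro Y'
      have : proxObj G γ Zc Y = proxObj G γ Zc X := by
        unfold proxObj
        rw [hg, hfro]
      rw [this]
      exact hmin Y'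
    have hYX : Y = X := huniq Y hYmin
    have := congrFun (congrFun hYX i)
    funext j
    have h1 : Y i j = X i j := congrFun (congrFun hYX i) j
    have h2 : Y i j = X k j := by
      simp only [hY, Matrix.of_apply, he, Equiv.swap_apply_left]
    rw [h2] at h1
    rw [h1]
  set p := X i0 with hpdef
  have hrowp : ∀ i, X i = p := fun i => hrows i i0
  -- total sum of entries of D is m
  have hDsum : ∑ l, ∑ k, D l k = (m:ℝ) := by
    have h := h3a
    rw [hABD] at h
    rw [← Matrix.mulVec_mulVec, Matrix.dotProduct_mulVec, h3b] at h
    simpa [dotProduct, Matrix.mulVec, onesV] using h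
  -- column sums of S vanish
  have hS1 : S *ᵥ (fun _ => (1:ℝ)) = 0 := by
    have hC1 : C *ᵥ (fun _ => (1:ℝ)) = 0 := (hnull _).mpr ⟨1, rfl⟩
    set w := S *ᵥ (fun _ => (1:ℝ)) with hw
    have hww : w ⬝ᵥ w = 0 := by
      have h1 : S *ᵥ w = 0 := by
        rw [hw, Matrix.mulVec_mulVec, hSS, hC1]
      calc w ⬝ᵥ w = (w ᵥ* S) ⬝ᵥ (fun _ => (1:ℝ)) := by rw [hw, Matrix.dotProduct_mulVec]
      _ = (S *ᵥ w) ⬝ᵥ (fun _ => (1:ℝ)) := by rw [← Matrix.mulVec_transpose, hsymT]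
      _ = 0 := by rw [h1, zero_dotProduct]
    funext i
    have hnn : ∀ k ∈ Finset.univ, (0:ℝ) ≤ w k * w k := fun k _ => mul_self_nonneg _
    have h0 := (Finset.sum_eq_zero_iff_of_nonneg hnn).mp hww i (Finset.mem_univ i)
    have := mul_self_eq_zero.mp h0
    simpa using this
  have hScol : ∀ k, ∑ i, S i k = 0 := by
    intro k
    have h0 := congrFun hS1 k
    simp only [Matrix.mulVec, dotProduct, mul_one, Pi.zero_apply] at h0
    rw [Finset.sum_congr rfl fun i (_ : i ∈ Finset.univ) => show S i k = S k i by
      have := congrFun (congrFun hsymT k) i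
      simpa [Matrix.transpose_apply] using this]
    exact h0
  -- the key column identity
  have hkey : ∀ j, (m:ℝ) * p j - γ * (∑ i, gradf i p j) = (m:ℝ) * z j := by
    intro j
    have hsum := congrArg (fun M : Matrix (Fin m) (Fin d) ℝ => ∑ i, M i j) hfix₁
    rw [hPdef] at hsum
    simp only [Matrix.sub_apply, Finset.sum_sub_distrib] at hsum
    have e1 : ∑ i, (D * X) i j = (m:ℝ) * p j := by
      simp only [Matrix.mul_apply]
      calc ∑ i, ∑ k, D i k * X k j = ∑ i, ∑ k, D i k * p j :=
            Finset.sum_congr rfl fun i _ => Finset.sum_congr rfl fun k _ => by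
              rw [congrFun (hrowp k) j]
      _ = (∑ i, ∑ k, D i k) * p j := by
            rw [Finset.sum_mul]
            exact Finset.sum_congr rfl fun i _ => (Finset.sum_mul _ _ _).symm
      _ = (m:ℝ) * p j := by rw [hDsum]
    have e2 : ∑ i, (γ • gradMat gradf X) i j = γ * ∑ i, gradf i p j := by
      simp only [Matrix.smul_apply, gradMat, Matrix.of_apply, smul_eq_mul]
      rw [← Finset.mul_sum]
      congr 1
      exact Finset.sum_congr rfl fun i _ => by rw [hrowp i]
    have e3 : ∑ i, (S * Wt) i j = 0 := by
      simp only [Matrix.mul_apply]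
      rw [Finset.sum_comm]
      calc ∑ k, ∑ i, S i k * Wt k j = ∑ k, (∑ i, S i k) * Wt k j :=
            Finset.sum_congr rfl fun k _ => (Finset.sum_mul _ _ _).symm
      _ = 0 := by simp [hScol]
    have e4 : ∑ i, Zt i j = (m:ℝ) * z j := by
      rw [Finset.sum_congr rfl fun i _ => hZrow i j]
      simp [Finset.sum_const, nsmul_eq_mul]
    rw [e1, e2, e3, e4] at hsum
    linarith
  -- abbreviations for the scalar analysis
  obtain ⟨hGbot, u0, hu0⟩ := hGp
  have hnem : Nonempty (Fin m) := ⟨i0⟩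
  set c : ℝ := 1 / (2 * γ) with hcdef
  have hc0 : 0 < c := by rw [hcdef]; positivity
  -- G p is finite
  have hGpt : G p ≠ ⊤ := by
    intro htop
    have hle := hmin (consMat m u0)
    have hL : proxObj G γ Zc X = ⊤ := by
      unfold proxObj gSum
      have hsumtop : ∑ i : Fin m, G (X i) = ⊤ := by
        rw [Finset.sum_congr rfl fun i _ => by rw [hrowp i, htop]]
        exact esum_top Finset.univ_nonempty
      rw [hsumtop]
      exact EReal.top_add_coe _
    rw [hL, top_le_iff] at hle
    have hRne : proxObj G γ Zc (consMat m u0) ≠ ⊤ := by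
      unfold proxObj gSum
      set r0 := (G u0).toReal with hr0
      have hu0eq : G u0 = (r0 : EReal) := (EReal.coe_toReal hu0 (hGbot u0)).symm
      have : ∑ i : Fin m, G ((consMat m u0) i) = (((m:ℝ) * r0 : ℝ) : EReal) := by
        rw [Finset.sum_congr rfl fun i _ => show G ((consMat m u0) i) = (r0:EReal) from hu0eq]
        rw [← ecoe_sum]
        norm_num [Finset.sum_const, nsmul_eq_mul]
      rw [this, ← EReal.coe_add]
      exact EReal.coe_ne_top _
    exact hRne hle
  set gp := (G p).toReal with hgpdef
  have hGpeq : G p = (gp : EReal) := (EReal.coe_toReal hGpt (hGbot p)).symm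
  set Npz := vecNormSq (fun j => p j - z j) with hNpz
  have hfroX : frobSq (X - Zc) = (m:ℝ) * Npz := by
    unfold frobSq
    have : ∀ i : Fin m, ∑ j, ((X - Zc) i j) ^ 2 = Npz := by
      intro i
      refine Finset.sum_congr rfl fun j _ => ?_
      simp only [Matrix.sub_apply]
      rw [congrFun (hrowp i) j, hZcrow i j]
    rw [Finset.sum_congr rfl fun i _ => this i]
    simp [Finset.sum_const, nsmul_eq_mul]
  have hgX : gSum G X = (((m:ℝ) * gp : ℝ) : EReal) := by
    unfold gSum
    rw [Finset.sum_congr rfl fun i _ => show G (X i) = (gp:EReal) by rw [hrowp i]; exact hGpeq]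
    rw [← ecoe_sum]
    norm_num [Finset.sum_const, nsmul_eq_mul]
  -- subgradient inequality for G at p
  have hsub : ∀ u : Fin d → ℝ,
      G p + ((∑ j, ((z j - p j) / γ) * (u j - p j) : ℝ) : EReal) ≤ G u := by
    intro u
    by_cases hu : G u = ⊤
    · rw [hu]; exact le_top
    have hGueq : G u = ((G u).toReal : EReal) := (EReal.coe_toReal hu (hGbot u)).symm
    set gu := (G u).toReal with hgu
    set s := ∑ j, (z j - p j) * (u j - p j) with hs
    set K := vecNormSq (fun j => u j - p j) with hK
    have hKnn : 0 ≤ K := Finset.sum_nonneg fun j _ => sq_nonneg _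
    have hcs : ∑ j, ((z j - p j) / γ) * (u j - p j) = 2 * c * s := by
      rw [hs, Finset.mul_sum]
      refine Finset.sum_congr rfl fun j _ => ?_
      rw [hcdef]
      field_simp
    rw [hGpeq, hGueq, hcs, ← EReal.coe_add, EReal.coe_le_coe_iff]
    have hcore : ∀ t : ℝ, 0 < t → t ≤ 1 → gp + 2 * c * s ≤ gu + t * c * K := by
      intro t ht0 ht1
      set w : Fin d → ℝ := fun j => p j + t * (u j - p j) with hw
      have hle := hmin (consMat m w)
      have hfroW : frobSq (consMat m w - Zc) = (m:ℝ) * (Npz + 2 * t * (-s) + t ^ 2 * K) := by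
        unfold frobSq
        have hrow : ∀ i : Fin m, ∑ j, ((consMat m w - Zc) i j) ^ 2
            = Npz + 2 * t * (-s) + t ^ 2 * K := by
          intro i
          have h1 : ∀ j, (consMat m w - Zc) i j = (p j - z j) + t * (u j - p j) := by
            intro j
            simp only [Matrix.sub_apply, consMat, Matrix.of_apply]
            rw [hZcrow i j, hw]
            ring
          rw [Finset.sum_congr rfl fun j _ => by rw [h1 j]]
          have := normSq_expand (fun j => p j - z j) (fun j => u j - p j) t
          have hmid : ∑ j, (p j - z j) * (u j - p j) = -s := by
            rw [hs, ← Finset.sum_neg_distrib]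
            exact Finset.sum_congr rfl fun j _ => by ring
          rw [hmid] at this
          exact this
        rw [Finset.sum_congr rfl fun i _ => hrow i]
        simp only [Finset.sum_const, Finset.card_univ, Fintype.card_fin, nsmul_eq_mul]
      have hgW : gSum G (consMat m w) ≤ (((m:ℝ) * ((1 - t) * gp + t * gu) : ℝ) : EReal) := by
        unfold gSum
        have hwc : ∀ i : Fin m, G ((consMat m w) i) ≤ (((1 - t) * gp + t * gu : ℝ) : EReal) := by
          intro i
          have hconv := hGc p u (1 - t) t (by linarith) (le_of_lt ht0) (by ring)
          have harg : (1 - t) • p + t • u = w := by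
            funext j
            simp only [Pi.add_apply, Pi.smul_apply, smul_eq_mul, hw]
            ring
          rw [harg] at hconv
          have : (consMat m w) i = w := rfl
          rw [this]
          calc G w ≤ ((1 - t) : EReal) * G p + (t : EReal) * G u := hconv
          _ = (((1 - t) * gp + t * gu : ℝ) : EReal) := by
              rw [hGpeq, hGueq]
              norm_cast
        calc ∑ i : Fin m, G ((consMat m w) i)
            ≤ ∑ i : Fin m, (((1 - t) * gp + t * gu : ℝ) : EReal) :=
              Finset.sum_le_sum fun i _ => hwc i
        _ = (((m:ℝ) * ((1 - t) * gp + t * gu) : ℝ) : EReal) := by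
              have hconstsum : (∑ _i : Fin m, ((1 - t) * gp + t * gu) : ℝ)
                  = (m:ℝ) * ((1 - t) * gp + t * gu) := by
                simp only [Finset.sum_const, Finset.card_univ, Fintype.card_fin, nsmul_eq_mul]
              rw [← ecoe_sum, hconstsum]
      have hreal : (m:ℝ) * gp + 1 / (2 * γ) * ((m:ℝ) * Npz)
          ≤ (m:ℝ) * ((1 - t) * gp + t * gu)
            + 1 / (2 * γ) * ((m:ℝ) * (Npz + 2 * t * (-s) + t ^ 2 * K)) := by
        have hL : proxObj G γ Zc X
            = (((m:ℝ) * gp + 1 / (2 * γ) * ((m:ℝ) * Npz) : ℝ) : EReal) := by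
          unfold proxObj
          rw [hgX, hfroX, ← EReal.coe_add]
        have hR : proxObj G γ Zc (consMat m w)
            ≤ (((m:ℝ) * ((1 - t) * gp + t * gu)
              + 1 / (2 * γ) * ((m:ℝ) * (Npz + 2 * t * (-s) + t ^ 2 * K)) : ℝ) : EReal) := by
          unfold proxObj
          rw [hfroW, EReal.coe_add]
          exact add_le_add_left hgW _
        have := le_trans (hL.symm.trans_le hle) hR
        exact EReal.coe_le_coe_iff.mp this
      rw [← hcdef] at hreal
      have hmt : 0 < (m:ℝ) * t := by positivity
      nlinarith [hreal, mul_pos hmpos ht0, hc0, hKnn]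
    by_contra hlt
    push_neg at hlt
    set ε := gp + 2 * c * s - gu with hε
    have hε0 : 0 < ε := by linarith
    have hcK : 0 ≤ c * K := mul_nonneg hc0.le hKnn
    have ht := hcore (min 1 (ε / (c * K + 1))) (by positivity) (min_le_left _ _)
    have h1 : min 1 (ε / (c * K + 1)) ≤ ε / (c * K + 1) := min_le_right _ _
    have h2 : min 1 (ε / (c * K + 1)) * (c * K) ≤ ε / (c * K + 1) * (c * K) :=
      mul_le_mul_of_nonneg_right h1 hcK
    have h3 : ε / (c * K + 1) * (c * K) < ε := by
      rw [div_mul_eq_mul_div, div_lt_iff₀ (by linarith)]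
      nlinarith
    have : min 1 (ε / (c * K + 1)) * c * K < ε := by
      calc min 1 (ε / (c * K + 1)) * c * K = min 1 (ε / (c * K + 1)) * (c * K) := by ring
      _ ≤ ε / (c * K + 1) * (c * K) := h2
      _ < ε := h3
    linarith
  -- G xstar is finite
  have hGst : G xstar ≠ ⊤ := by
    intro htop
    have h := hxstar u0
    have hLt : ((((1 / (m : ℝ)) * ∑ i, f i xstar) : ℝ) : EReal) + G xstar = ⊤ := by
      rw [htop]
      exact EReal.coe_add_top _
    rw [hLt, top_le_iff] at h
    have hu0eq : G u0 = ((G u0).toReal : EReal) := (EReal.coe_toReal hu0 (hGbot u0)).symm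
    rw [hu0eq, ← EReal.coe_add] at h
    exact EReal.coe_ne_top _ h
  set gs := (G xstar).toReal with hgs
  have hGseq : G xstar = (gs : EReal) := (EReal.coe_toReal hGst (hGbot xstar)).symm
  set s' := ∑ j, (z j - p j) * (xstar j - p j) with hs'
  set K' := vecNormSq (fun j => xstar j - p j) with hK'
  have hK'nn : 0 ≤ K' := Finset.sum_nonneg fun j _ => sq_nonneg _
  have hA2 : gp + 2 * c * s' ≤ gs := by
    have h := hsub xstar
    have hcs : ∑ j, ((z j - p j) / γ) * (xstar j - p j) = 2 * c * s' := by
      rw [hs', Finset.mul_sum]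
      refine Finset.sum_congr rfl fun j _ => ?_
      rw [hcdef]
      field_simp
    rw [hGpeq, hGseq, hcs, ← EReal.coe_add, EReal.coe_le_coe_iff] at h
    exact h
  have hA3 : (1/(m:ℝ)) * (∑ i, f i xstar) + gs ≤ (1/(m:ℝ)) * (∑ i, f i p) + gp := by
    have h := hxstar p
    rw [hGpeq, hGseq, ← EReal.coe_add, ← EReal.coe_add, EReal.coe_le_coe_iff] at h
    exact h
  have hA3' : (∑ i, f i xstar) + (m:ℝ) * gs ≤ (∑ i, f i p) + (m:ℝ) * gp := by
    have hmul := mul_le_mul_of_nonneg_left hA3 hmpos.le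
    rw [mul_add, mul_add, ← mul_assoc, ← mul_assoc, mul_one_div_cancel hmne,
      one_mul, one_mul] at hmul
    exact hmul
  have hA1 : (∑ i, f i p) - (m:ℝ) * (2 * c) * s' + (m:ℝ) * (μ/2 * K') ≤ ∑ i, f i xstar := by
    have hsg : ∀ i, f i p + (∑ j, gradf i p j * (xstar j - p j))
        + μ/2 * vecNormSq (xstar - p) ≤ f i xstar :=
      fun i => strong_grad (hdiff i) (hsc i) p xstar
    have hsum := Finset.sum_le_sum (fun i (_ : i ∈ Finset.univ) => hsg i)
    rw [Finset.sum_add_distrib, Finset.sum_add_distrib] at hsum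
    have hgradsum : ∑ i, ∑ j, gradf i p j * (xstar j - p j) = -((m:ℝ) * (2 * c) * s') := by
      rw [Finset.sum_comm]
      rw [Finset.sum_congr rfl fun j (_ : j ∈ Finset.univ) =>
        (Finset.sum_mul Finset.univ (fun i => gradf i p j) (xstar j - p j)).symm]
      have h2 : ∀ j, (∑ i, gradf i p j) = ((m:ℝ) * p j - (m:ℝ) * z j) / γ := by
        intro j
        have hk := hkey j
        field_simp
        linarith
      rw [Finset.sum_congr rfl fun j _ => by rw [h2 j]]
      rw [hs', Finset.mul_sum, ← Finset.sum_neg_distrib]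
      refine Finset.sum_congr rfl fun j _ => ?_
      rw [hcdef]
      field_simp
      ring
    have hNeq : vecNormSq (xstar - p) = K' := by
      rw [hK']
      unfold vecNormSq
      exact Finset.sum_congr rfl fun j _ => by rw [Pi.sub_apply]
    rw [hgradsum] at hsum
    have hconst : ∑ _i : Fin m, μ/2 * vecNormSq (xstar - p) = (m:ℝ) * (μ/2 * K') := by
      rw [hNeq]
      simp [Finset.sum_const, nsmul_eq_mul]
    rw [hconst] at hsum
    linarith
  have hK'le : K' ≤ 0 := by
    have hA2' := mul_le_mul_of_nonneg_left hA2 hmpos.le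
    by_contra hK
    push_neg at hK
    nlinarith [hA1, hA3', mul_le_mul_of_nonneg_left hA2 hmpos.le,
      mul_pos hmpos (mul_pos (half_pos hμ) hK), hmpos]
  have hK'0 : K' = 0 := le_antisymm hK'le hK'nn
  have hpx : p = xstar := by
    funext j
    have hnn : ∀ k ∈ Finset.univ, (0:ℝ) ≤ (xstar k - p k)^2 := fun k _ => sq_nonneg _
    have h0 := (Finset.sum_eq_zero_iff_of_nonneg hnn).mp (by rw [← hK'0]; rfl) j (Finset.mem_univ j)
    have := pow_eq_zero_iff (n := 2) (by norm_num) |>.mp h0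
    linarith [sub_eq_zero.mp this]
  ext i j
  rw [congrFun (hrowp i) j, hpx]
  rfl
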